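/- Let H be a complex Hilbert space, α ∈ (1, 2), γ ∈ (0, 1) and M > 0. There exists θ₀ ∈ (π/2, π) such that for every θ ∈ (π/2, θ₀) there is a constant c > 0, depending only on α, γ, θ, M, with the property: for every time step τ > 0, every z ∈ D(τ,θ), writing w = δ_τ(e^{−zτ}) with δ_τ the BDF3 generating symbol, and for all bounded linear operators R₁, R₂ on H satisfying ‖R₁‖ ≤ M|z|^{−α}, ‖R₂‖ ≤ M|z|^{−α} and the resolvent identity R₂ − R₁ = (z^α − w^α) R₂ ∘ R₁, one has ‖R₂ · w^{3−γ} (ρ₂(e^{−zτ})/2) τ³ − R₁ · z^{−γ}‖ ≤ c τ³ |z|^{3−α−γ}. -/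

import Mathlib

open Complex Set

/-- The BDF3 generating symbol `δ_τ(ξ) = τ⁻¹(11/6 − 3ξ + (3/2)ξ² − (1/3)ξ³)`. -/
noncomputable def bdf3 (τ : ℝ) (ξ : ℂ) : ℂ :=
  (τ : ℂ)⁻¹ * (11 / 6 - 3 * ξ + (3 / 2) * ξ ^ 2 - (1 / 3) * ξ ^ 3)

/-- The region `D(τ,θ)`: nonzero `z` with either `|arg z| = θ` and `|Im z| ≤ π/τ`,
or `|z| ≤ 1/τ` and `|arg z| ≤ θ`. -/
def Dset (τ θ : ℝ) : Set ℂ :=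
  {z : ℂ | z ≠ 0 ∧
    ((|z.arg| = θ ∧ |z.im| ≤ Real.pi / τ) ∨ (‖z‖ ≤ 1 / τ ∧ |z.arg| ≤ θ))}

/-- Closed form of the generating function `Σ_{n≥1} n² ξⁿ`. -/
noncomputable def rho2 (ξ : ℂ) : ℂ := ξ * (1 + ξ) / (1 - ξ) ^ 3

noncomputable def Complex.abs : AbsoluteValue ℂ ℝ where
  toFun x := ‖x‖
  map_mul' := norm_mul
  nonneg' := norm_nonneg
  eq_zero' _ := norm_eq_zero
  add_le' := norm_add_le

@[simp] lemma Complex.abs_apply (z : ℂ) : Complex.abs z = ‖z‖ := rfl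
lemma Complex.norm_eq_abs (z : ℂ) : ‖z‖ = Complex.abs z := rfl
@[simp] lemma Complex.abs_ofReal (r : ℝ) : Complex.abs (r : ℂ) = |r| := by simp
@[simp] lemma Complex.abs_ofNat (n : ℕ) [n.AtLeastTwo] :
    Complex.abs (no_index (OfNat.ofNat n : ℂ)) = OfNat.ofNat n := by simp
lemma Complex.abs_intCast (n : ℤ) : Complex.abs (n : ℂ) = |(n : ℝ)| := Complex.norm_intCast n
lemma Complex.abs_I : Complex.abs Complex.I = 1 := by simp
lemma Complex.abs_two : Complex.abs 2 = 2 := by simp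
lemma Complex.abs_cpow_real (x : ℂ) (y : ℝ) : Complex.abs (x ^ (y : ℂ)) = Complex.abs x ^ y :=
  Complex.norm_cpow_real x y
lemma Complex.abs_exp (z : ℂ) : Complex.abs (Complex.exp z) = Real.exp z.re := Complex.norm_exp z
lemma Complex.abs_re_le_abs (z : ℂ) : |z.re| ≤ Complex.abs z := Complex.abs_re_le_norm z
lemma Complex.abs_im_le_abs (z : ℂ) : |z.im| ≤ Complex.abs z := Complex.abs_im_le_norm z
lemma Complex.abs_exp_sub_one_sub_id_le {x : ℂ} (hx : Complex.abs x ≤ 1) :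
    Complex.abs (Complex.exp x - 1 - x) ≤ Complex.abs x ^ 2 := Complex.norm_exp_sub_one_sub_id_le hx
lemma Complex.abs_exp_sub_one_le {x : ℂ} (hx : Complex.abs x ≤ 1) :
    Complex.abs (Complex.exp x - 1) ≤ 2 * Complex.abs x := Complex.norm_exp_sub_one_le hx
lemma Complex.continuous_abs : Continuous Complex.abs := continuous_norm

noncomputable def fdel (x : ℂ) : ℂ :=
  11 / 6 - 3 * Complex.exp (-x) + (3 / 2) * Complex.exp (-x) ^ 2
    - (1 / 3) * Complex.exp (-x) ^ 3

lemma exp_sq (x : ℂ) : Complex.exp x ^ 2 = Complex.exp (2 * x) := by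
  rw [show (2:ℂ) * x = ((2:ℕ):ℂ) * x by norm_num, Complex.exp_nat_mul]

lemma exp_cube (x : ℂ) : Complex.exp x ^ 3 = Complex.exp (3 * x) := by
  rw [show (3:ℂ) * x = ((3:ℕ):ℂ) * x by norm_num, Complex.exp_nat_mul]

lemma exp_taylor4 {z : ℂ} (hz : Complex.abs z ≤ 1) :
    Complex.abs (Complex.exp z - (1 + z + z^2/2 + z^3/6)) ≤ (5/96) * Complex.abs z ^ 4 := by
  have h := Complex.exp_bound hz (n := 4) (by norm_num)
  have hs : (∑ m ∈ Finset.range 4, z ^ m / m.factorial) = 1 + z + z^2/2 + z^3/6 := by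
    simp [Finset.sum_range_succ, Nat.factorial]
  rw [hs] at h
  calc Complex.abs (Complex.exp z - (1 + z + z^2/2 + z^3/6))
      ≤ Complex.abs z ^ 4 * ((4+1 : ℕ) * ((Nat.factorial 4 : ℝ) * 4)⁻¹) := h
    _ = (5/96) * Complex.abs z ^ 4 := by norm_num [Nat.factorial]; ring

lemma exp_taylor7 {z : ℂ} (hz : Complex.abs z ≤ 1) :
    Complex.abs (Complex.exp z - (1 + z + z^2/2 + z^3/6 + z^4/24 + z^5/120 + z^6/720)) ≤
      (1/4410) * Complex.abs z ^ 7 := by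
  have h := Complex.exp_bound hz (n := 7) (by norm_num)
  have hs : (∑ m ∈ Finset.range 7, z ^ m / m.factorial)
      = 1 + z + z^2/2 + z^3/6 + z^4/24 + z^5/120 + z^6/720 := by
    simp [Finset.sum_range_succ, Nat.factorial]
  rw [hs] at h
  calc Complex.abs (Complex.exp z - (1 + z + z^2/2 + z^3/6 + z^4/24 + z^5/120 + z^6/720))
      ≤ Complex.abs z ^ 7 * ((7+1 : ℕ) * ((Nat.factorial 7 : ℝ) * 7)⁻¹) := h
    _ ≤ (1/4410) * Complex.abs z ^ 7 := by
        norm_num [Nat.factorial]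
        exact le_of_eq (mul_comm _ _)

lemma fdel_sub_self {x : ℂ} (hx : Complex.abs x ≤ 1/3) :
    Complex.abs (fdel x - x) ≤ 3 * Complex.abs x ^ 4 := by
  have h2 : Complex.exp (-x) ^ 2 = Complex.exp (-(2*x)) := by rw [exp_sq]; ring_nf
  have h3 : Complex.exp (-x) ^ 3 = Complex.exp (-(3*x)) := by rw [exp_cube]; ring_nf
  set T : ℂ → ℂ := fun z => 1 + z + z^2/2 + z^3/6 with hT
  have key : fdel x - x =
      -3 * (Complex.exp (-x) - T (-x)) + (3/2) * (Complex.exp (-(2*x)) - T (-(2*x)))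
        - (1/3) * (Complex.exp (-(3*x)) - T (-(3*x))) := by
    rw [fdel, ← h2, ← h3, hT]; ring
  have b1 := exp_taylor4 (z := -x) (by simpa using hx.trans (by norm_num))
  have b2 := exp_taylor4 (z := -(2*x)) (by
    simp only [map_neg_eq_map, map_mul, Complex.abs_ofNat]
    calc (2:ℝ) * Complex.abs x ≤ 2 * (1/3) := by linarith [hx]
      _ ≤ 1 := by norm_num)
  have b3 := exp_taylor4 (z := -(3*x)) (by
    simp only [map_neg_eq_map, map_mul, Complex.abs_ofNat]
    calc (3:ℝ) * Complex.abs x ≤ 3 * (1/3) := by linarith [hx]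
      _ ≤ 1 := by norm_num)
  rw [key]
  have e2 : Complex.abs (-(2*x)) = 2 * Complex.abs x := by
    simp [map_neg_eq_map, map_mul]
  have e3 : Complex.abs (-(3*x)) = 3 * Complex.abs x := by
    simp [map_neg_eq_map, map_mul]
  have e1 : Complex.abs (-x) = Complex.abs x := by simp
  rw [e1] at b1; rw [e2] at b2; rw [e3] at b3
  calc Complex.abs (-3 * (Complex.exp (-x) - T (-x)) + (3/2) * (Complex.exp (-(2*x)) - T (-(2*x)))
        - (1/3) * (Complex.exp (-(3*x)) - T (-(3*x))))
      ≤ Complex.abs (-3 * (Complex.exp (-x) - T (-x)) + (3/2) * (Complex.exp (-(2*x)) - T (-(2*x))))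
        + Complex.abs ((1/3) * (Complex.exp (-(3*x)) - T (-(3*x)))) := by
        exact (Complex.abs.sub_le_add _ _)
    _ ≤ (Complex.abs (-3 * (Complex.exp (-x) - T (-x)))
        + Complex.abs ((3/2) * (Complex.exp (-(2*x)) - T (-(2*x)))))
        + Complex.abs ((1/3) * (Complex.exp (-(3*x)) - T (-(3*x)))) := by
        gcongr; exact Complex.abs.add_le _ _
    _ ≤ 3 * ((5/96) * Complex.abs x ^ 4) + (3/2) * ((5/96) * (2*Complex.abs x) ^ 4)
        + (1/3) * ((5/96) * (3*Complex.abs x) ^ 4) := by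
        simp only [map_mul, map_neg_eq_map]
        have : Complex.abs (3:ℂ) = 3 := by norm_num
        gcongr <;> simp_all [Complex.abs_ofNat]
    _ ≤ 3 * Complex.abs x ^ 4 := by ring_nf; nlinarith [pow_nonneg (Complex.abs.nonneg x) 4]

lemma den_lower {x : ℂ} (hx : Complex.abs x ≤ 1/7) :
    Complex.abs x / 2 ≤ Complex.abs (1 - Complex.exp (-x)) := by
  have h := Complex.abs_exp_sub_one_sub_id_le (x := -x) (by simpa using hx.trans (by norm_num))
  have key : Complex.abs (x - (1 - Complex.exp (-x))) ≤ Complex.abs x ^ 2 := by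
    calc Complex.abs (x - (1 - Complex.exp (-x)))
        = Complex.abs (Complex.exp (-x) - 1 - (-x)) := by
          rw [show x - (1 - Complex.exp (-x)) = Complex.exp (-x) - 1 - (-x) by ring]
      _ ≤ Complex.abs (-x) ^ 2 := h
      _ = Complex.abs x ^ 2 := by simp
  have tri : Complex.abs x - Complex.abs (1 - Complex.exp (-x)) ≤ Complex.abs x ^ 2 := by
    have h2 := norm_sub_norm_le x (1 - Complex.exp (-x))
    simp only [Complex.norm_eq_abs] at h2
    linarith
  nlinarith [Complex.abs.nonneg x]

lemma rho2_est {x : ℂ} (hx0 : x ≠ 0) (hx : Complex.abs x ≤ 1/7) :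
    Complex.abs (x^3 * rho2 (Complex.exp (-x)) / 2 - 1) ≤ 2 * Complex.abs x ^ 3 := by
  have hd := den_lower hx
  have hxpos : 0 < Complex.abs x := by simpa using hx0
  have hden : (1 : ℂ) - Complex.exp (-x) ≠ 0 := by
    intro h
    rw [h] at hd
    simp at hd
    rw [Complex.norm_eq_abs] at hd
    nlinarith
  have h2 : Complex.exp (-x) ^ 2 = Complex.exp (-(2*x)) := by rw [exp_sq]; ring_nf
  have h3 : Complex.exp (-x) ^ 3 = Complex.exp (-(3*x)) := by rw [exp_cube]; ring_nf
  set E1 := Complex.exp (-x)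
  set E2 := Complex.exp (-(2*x))
  set E3 := Complex.exp (-(3*x))
  set N : ℂ := x^3 * E1 * (1 + E1) - 2 * (1 - E1)^3 with hN
  have hsplit : x^3 * rho2 E1 / 2 - 1 = N / (2 * (1 - E1)^3) := by
    rw [rho2, hN]
    field_simp
  -- bound N
  set T7 : ℂ → ℂ := fun z => 1 + z + z^2/2 + z^3/6 + z^4/24 + z^5/120 + z^6/720 with hT7
  set T4 : ℂ → ℂ := fun z => 1 + z + z^2/2 + z^3/6 with hT4
  have keyN : N = 6 * (E1 - T7 (-x)) - 6 * (E2 - T7 (-(2*x))) + 2 * (E3 - T7 (-(3*x)))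
      + x^3 * (E1 - T4 (-x)) + x^3 * (E2 - T4 (-(2*x))) := by
    rw [hN, ← h2, ← h3, hT7, hT4]; ring
  have a1 : Complex.abs (-x) ≤ 1 := by simpa using hx.trans (by norm_num)
  have a2 : Complex.abs (-(2*x)) ≤ 1 := by
    simp only [map_neg_eq_map, map_mul, Complex.abs_ofNat]; nlinarith
  have a3 : Complex.abs (-(3*x)) ≤ 1 := by
    simp only [map_neg_eq_map, map_mul, Complex.abs_ofNat]; nlinarith
  have e1 : Complex.abs (-x) = Complex.abs x := by simp
  have e2 : Complex.abs (-(2*x)) = 2 * Complex.abs x := by simp [map_neg_eq_map, map_mul]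
  have e3 : Complex.abs (-(3*x)) = 3 * Complex.abs x := by simp [map_neg_eq_map, map_mul]
  have b1 := exp_taylor7 a1; rw [e1] at b1
  have b2 := exp_taylor7 a2; rw [e2] at b2
  have b3 := exp_taylor7 a3; rw [e3] at b3
  have c1 := exp_taylor4 a1; rw [e1] at c1
  have c2 := exp_taylor4 a2; rw [e2] at c2
  have hNb : Complex.abs N ≤ 3 * Complex.abs x ^ 7 := by
    rw [keyN]
    have t := Complex.abs.nonneg x
    calc Complex.abs (6 * (E1 - T7 (-x)) - 6 * (E2 - T7 (-(2*x))) + 2 * (E3 - T7 (-(3*x)))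
        + x^3 * (E1 - T4 (-x)) + x^3 * (E2 - T4 (-(2*x))))
        ≤ 6 * Complex.abs (E1 - T7 (-x)) + 6 * Complex.abs (E2 - T7 (-(2*x)))
          + 2 * Complex.abs (E3 - T7 (-(3*x)))
          + Complex.abs x ^ 3 * Complex.abs (E1 - T4 (-x))
          + Complex.abs x ^ 3 * Complex.abs (E2 - T4 (-(2*x))) := by
          have := Complex.abs.add_le
          calc Complex.abs (6 * (E1 - T7 (-x)) - 6 * (E2 - T7 (-(2*x))) + 2 * (E3 - T7 (-(3*x)))
              + x^3 * (E1 - T4 (-x)) + x^3 * (E2 - T4 (-(2*x))))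
              ≤ Complex.abs (6 * (E1 - T7 (-x)) - 6 * (E2 - T7 (-(2*x))) + 2 * (E3 - T7 (-(3*x)))
                + x^3 * (E1 - T4 (-x))) + Complex.abs (x^3 * (E2 - T4 (-(2*x)))) :=
                Complex.abs.add_le _ _
            _ ≤ (Complex.abs (6 * (E1 - T7 (-x)) - 6 * (E2 - T7 (-(2*x))) + 2 * (E3 - T7 (-(3*x))))
                + Complex.abs (x^3 * (E1 - T4 (-x)))) + Complex.abs (x^3 * (E2 - T4 (-(2*x)))) := by
                gcongr; exact Complex.abs.add_le _ _
            _ ≤ ((Complex.abs (6 * (E1 - T7 (-x)) - 6 * (E2 - T7 (-(2*x))))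
                + Complex.abs (2 * (E3 - T7 (-(3*x)))))
                + Complex.abs (x^3 * (E1 - T4 (-x)))) + Complex.abs (x^3 * (E2 - T4 (-(2*x)))) := by
                gcongr; exact Complex.abs.add_le _ _
            _ ≤ (((Complex.abs (6 * (E1 - T7 (-x))) + Complex.abs (6 * (E2 - T7 (-(2*x)))))
                + Complex.abs (2 * (E3 - T7 (-(3*x)))))
                + Complex.abs (x^3 * (E1 - T4 (-x)))) + Complex.abs (x^3 * (E2 - T4 (-(2*x)))) := by
                gcongr; exact Complex.abs.sub_le_add _ _
            _ = 6 * Complex.abs (E1 - T7 (-x)) + 6 * Complex.abs (E2 - T7 (-(2*x)))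
                + 2 * Complex.abs (E3 - T7 (-(3*x)))
                + Complex.abs x ^ 3 * Complex.abs (E1 - T4 (-x))
                + Complex.abs x ^ 3 * Complex.abs (E2 - T4 (-(2*x))) := by
                simp only [map_mul, map_pow, Complex.abs_ofNat]
                try ring
      _ ≤ 6 * ((1/4410) * Complex.abs x ^ 7) + 6 * ((1/4410) * (2*Complex.abs x) ^ 7)
          + 2 * ((1/4410) * (3*Complex.abs x) ^ 7)
          + Complex.abs x ^ 3 * ((5/96) * Complex.abs x ^ 4)
          + Complex.abs x ^ 3 * ((5/96) * (2*Complex.abs x) ^ 4) := by gcongr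
      _ ≤ 3 * Complex.abs x ^ 7 := by nlinarith [pow_nonneg t 7]
  have hne2 : (2 * (1 - E1)^3 : ℂ) ≠ 0 := mul_ne_zero two_ne_zero (pow_ne_zero _ hden)
  have habs : Complex.abs (2 * (1 - E1)^3) = 2 * Complex.abs (1 - E1) ^ 3 := by
    simp [map_mul, map_pow]
  rw [hsplit, map_div₀, div_le_iff₀ (Complex.abs.pos hne2), habs]
  have t := Complex.abs.nonneg x
  have h76 : Complex.abs x ^ 7 ≤ (1/7) * Complex.abs x ^ 6 := by
    have hh : Complex.abs x ^ 7 = Complex.abs x * Complex.abs x ^ 6 := by ring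
    rw [hh]
    exact mul_le_mul_of_nonneg_right hx (pow_nonneg t 6)
  calc Complex.abs N ≤ 3 * Complex.abs x ^ 7 := hNb
    _ ≤ 2 * Complex.abs x ^ 3 * (2 * (Complex.abs x / 2) ^ 3) := by
        have : 2 * Complex.abs x ^ 3 * (2 * (Complex.abs x / 2) ^ 3) = (1/2) * Complex.abs x ^ 6 := by ring
        rw [this]; nlinarith [pow_nonneg t 6]
    _ ≤ 2 * Complex.abs x ^ 3 * (2 * Complex.abs (1 - E1) ^ 3) := by
        gcongr <;> positivity

set_option linter.unreachableTactic false
set_option linter.unusedTactic false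

lemma cpow_real_smul {t : ℝ} (ht : 0 < t) (a : ℂ) (s : ℝ) :
    ((t : ℂ) * a) ^ (s : ℂ) = ((t ^ s : ℝ) : ℂ) * a ^ (s : ℂ) := by
  rcases eq_or_ne a 0 with rfl | ha
  · rcases eq_or_ne s 0 with rfl | hs
    · simp
    · simp [Complex.zero_cpow (Complex.ofReal_ne_zero.2 hs)]
  · have ht' : (t : ℂ) ≠ 0 := Complex.ofReal_ne_zero.2 ht.ne'
    rw [Complex.cpow_def_of_ne_zero (mul_ne_zero ht' ha),
      Complex.log_ofReal_mul ht ha, add_mul, Complex.exp_add,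
      ← Complex.cpow_def_of_ne_zero ha]
    congr 1
    rw [Real.rpow_def_of_pos ht, Complex.ofReal_exp]
    push_cast
    ring_nf

lemma mul_cpow_arg {x u : ℂ} (hx : x ≠ 0) (hu : u ≠ 0)
    (h : Complex.arg x + Complex.arg u ∈ Set.Ioc (-Real.pi) Real.pi) (s : ℂ) :
    (x * u) ^ s = x ^ s * u ^ s := by
  rw [Complex.cpow_def_of_ne_zero (mul_ne_zero hx hu), Complex.log_mul hx hu h, add_mul,
    Complex.exp_add, ← Complex.cpow_def_of_ne_zero hx, ← Complex.cpow_def_of_ne_zero hu]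

lemma near_one_facts {u : ℂ} (h : Complex.abs (u - 1) ≤ 1/100) :
    u ≠ 0 ∧ |Complex.arg u| ≤ Real.pi / 6 := by
  have hre : (99:ℝ)/100 ≤ u.re := by
    have := Complex.abs_re_le_abs (u - 1)
    simp only [Complex.sub_re, Complex.one_re] at this
    have := abs_le.1 (this.trans h)
    linarith [this.1]
  have him : |u.im| ≤ 1/100 := by
    have := Complex.abs_im_le_abs (u - 1)
    simp only [Complex.sub_im, Complex.one_im, sub_zero] at this
    exact this.trans h
  have habs : (99:ℝ)/100 ≤ Complex.abs u := le_trans hre (by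
    calc u.re ≤ |u.re| := le_abs_self _
      _ ≤ Complex.abs u := Complex.abs_re_le_abs u)
  have hu : u ≠ 0 := by
    intro h0; rw [h0] at habs; simp at habs; linarith
  refine ⟨hu, ?_⟩
  rw [Complex.arg_of_re_nonneg (by linarith)]
  have hb : |u.im / Complex.abs u| ≤ 1/2 := by
    rw [abs_div, _root_.abs_of_nonneg (Complex.abs.nonneg u)]
    rw [div_le_iff₀ (by linarith)]
    calc |u.im| ≤ 1/100 := him
      _ ≤ 1/2 * (99/100) := by norm_num
      _ ≤ 1/2 * Complex.abs u := by linarith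
  have hb' := abs_le.1 hb
  have harc : Real.arcsin (1/2) = Real.pi/6 := by
    rw [show (1/2 : ℝ) = Real.sin (Real.pi/6) by rw [Real.sin_pi_div_six]]
    exact Real.arcsin_sin (by linarith [Real.pi_pos]) (by linarith [Real.pi_pos])
  rw [abs_le]
  constructor
  · have := Real.monotone_arcsin (le_trans (by linarith) hb'.1 : -(1/2:ℝ) ≤ u.im / Complex.abs u)
    rw [show (-(1/2):ℝ) = -(1/2) by rfl] at this
    have h2 : Real.arcsin (-(1/2)) = -(Real.pi/6) := by rw [Real.arcsin_neg, harc]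
    -- this : arcsin (-(1/2)) ≤ arcsin (im/abs)
    rw [h2] at this; exact this
  · have := Real.monotone_arcsin hb'.2
    rw [harc] at this; exact this

lemma cpow_near_one {u : ℂ} (h : Complex.abs (u - 1) ≤ 1/100) {s : ℝ} (hs : |s| ≤ 3) :
    Complex.abs (u ^ (s : ℂ) - 1) ≤ 12 * Complex.abs (u - 1) := by
  obtain ⟨hu, -⟩ := near_one_facts h
  have hlog : ‖Complex.log u‖ ≤ (3/2) * ‖u - 1‖ := by
    have := Complex.norm_log_one_add_half_le_self (z := u - 1)
      (by rw [Complex.norm_eq_abs]; linarith)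
    simpa using this
  rw [Complex.cpow_def_of_ne_zero hu]
  have hsmall : Complex.abs (Complex.log u * s) ≤ 1 := by
    rw [map_mul]
    have h1 : Complex.abs (Complex.log u) ≤ (3/2) * (1/100) := by
      rw [← Complex.norm_eq_abs]
      refine hlog.trans ?_
      rw [Complex.norm_eq_abs]
      linarith
    have h2 : Complex.abs (s : ℂ) ≤ 3 := by rw [Complex.abs_ofReal]; exact hs
    calc Complex.abs (Complex.log u) * Complex.abs (s:ℂ) ≤ (3/2 * (1/100)) * 3 := by
          apply mul_le_mul h1 h2 (Complex.abs.nonneg _) (by norm_num)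
      _ ≤ 1 := by norm_num
  have := Complex.abs_exp_sub_one_le hsmall
  refine this.trans ?_
  rw [map_mul]
  have h2 : Complex.abs (s : ℂ) ≤ 3 := by rw [Complex.abs_ofReal]; exact hs
  have h1 : Complex.abs (Complex.log u) ≤ (3/2) * Complex.abs (u - 1) := by
    rw [← Complex.norm_eq_abs]
    refine hlog.trans ?_
    rw [Complex.norm_eq_abs]
  calc 2 * (Complex.abs (Complex.log u) * Complex.abs (s:ℂ))
      ≤ 2 * ((3/2) * Complex.abs (u-1) * 3) := by
        apply mul_le_mul_of_nonneg_left _ (by norm_num)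
        apply mul_le_mul h1 h2 (Complex.abs.nonneg _) (by positivity)
    _ ≤ 12 * Complex.abs (u - 1) := by linarith [Complex.abs.nonneg (u-1)]

lemma den_min : ∃ m : ℝ, 0 < m ∧ ∀ x : ℂ, 1/7 ≤ Complex.abs x → Complex.abs x ≤ 3.2 →
    m ≤ Complex.abs (1 - Complex.exp (-x)) := by
  set K : Set ℂ := Metric.closedBall 0 3.2 ∩ (Metric.ball 0 (1/7))ᶜ with hK
  have hmem : ∀ x : ℂ, x ∈ K ↔ Complex.abs x ≤ 3.2 ∧ 1/7 ≤ Complex.abs x := by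
    intro x
    simp [hK, Metric.mem_closedBall, Metric.mem_ball, Complex.dist_eq, not_lt]
  have hcomp : IsCompact K := (isCompact_closedBall 0 3.2).inter_right
    (Metric.isOpen_ball.isClosed_compl)
  have hne : K.Nonempty := ⟨1, by rw [hmem]; norm_num⟩
  have hcont : ContinuousOn (fun x : ℂ => Complex.abs (1 - Complex.exp (-x))) K := by
    apply Continuous.continuousOn
    exact Complex.continuous_abs.comp (continuous_const.sub (Complex.continuous_exp.comp continuous_neg))
  obtain ⟨x₀, hx₀K, hmin⟩ := hcomp.exists_isMinOn hne hcont
  refine ⟨Complex.abs (1 - Complex.exp (-x₀)), ?_, ?_⟩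
  · rw [AbsoluteValue.pos_iff]
    intro h0
    have he : Complex.exp (-x₀) = 1 := by linear_combination -h0
    obtain ⟨n, hn⟩ := Complex.exp_eq_one_iff.1 he
    have hKx := (hmem x₀).1 hx₀K
    have habs : Complex.abs x₀ = |(n:ℝ)| * (2*Real.pi) := by
      have h1 : Complex.abs (-x₀) = Complex.abs ((n:ℂ) * (2*(Real.pi:ℂ)*Complex.I)) := by rw [hn]
      simp only [map_neg_eq_map, map_mul, Complex.abs_intCast, Complex.abs_ofReal,
        Complex.abs_I, Complex.abs_two, mul_one] at h1
      rw [h1, _root_.abs_of_nonneg Real.pi_pos.le]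
    rcases eq_or_ne n 0 with rfl | hn0
    · simp only [Int.cast_zero, abs_zero, zero_mul] at habs
      rw [habs] at hKx
      linarith [hKx.2]
    · have h1 : (1:ℝ) ≤ |(n:ℝ)| := by
        rw [← Int.cast_abs]
        exact_mod_cast Int.one_le_abs hn0
      have : (2:ℝ)*Real.pi ≤ Complex.abs x₀ := by
        rw [habs]
        nlinarith [Real.pi_pos]
      linarith [hKx.1, Real.pi_gt_three]
  · intro x h1 h2
    exact hmin ((hmem x).2 ⟨h2, h1⟩)

set_option maxHeartbeats 1000000 in
lemma scalar_main (α γ : ℝ) (hα : α ∈ Set.Ioo (1:ℝ) 2) (hγ : γ ∈ Set.Ioo (0:ℝ) 1) :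
    ∃ C : ℝ, 0 < C ∧ ∀ x : ℂ, x ≠ 0 → Complex.abs x ≤ 3.2 →
      |x.arg| ≤ Real.pi/2 + 1/100 →
      Complex.abs (x ^ (α:ℂ) - (fdel x) ^ (α:ℂ)) ≤ C * Complex.abs x ^ (α+3) ∧
      Complex.abs ((fdel x) ^ (((3-γ:ℝ)):ℂ) * (rho2 (Complex.exp (-x)) / 2) - x ^ (((-γ:ℝ)):ℂ))
        ≤ C * Complex.abs x ^ (3-γ) := by
  obtain ⟨hα1, hα2⟩ := hα
  obtain ⟨hγ1, hγ2⟩ := hγ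
  obtain ⟨m, hm, hden⟩ := den_min
  set Eb : ℝ := Real.exp 3.2 with hEbdef
  have hEb1 : 1 ≤ Eb := by
    rw [hEbdef, show (1:ℝ) = Real.exp 0 by simp]
    exact Real.exp_le_exp.2 (by norm_num)
  set Cf : ℝ := 11/6 + 3*Eb + (3/2)*Eb^2 + (1/3)*Eb^3 with hCfdef
  have hCf0 : 0 < Cf := by positivity
  have hsev : (0:ℝ) < (1/7:ℝ) ^ (α+3) := by positivity
  have hsev2 : (0:ℝ) < (1/7:ℝ) ^ (3-γ) := by positivity
  set D1 : ℝ := (3.2:ℝ)^α + Cf^α with hD1def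
  have hD1 : 0 < D1 := by positivity
  set D2 : ℝ := Cf^(3-γ) * (Eb*(1+Eb)/m^3) / 2 + (1/7:ℝ)^(-γ) with hD2def
  have hD2 : 0 < D2 := by positivity
  refine ⟨max 39 (max (D1 / (1/7:ℝ)^(α+3)) (D2 / (1/7:ℝ)^(3-γ))), by positivity, ?_⟩
  set C : ℝ := max 39 (max (D1 / (1/7:ℝ)^(α+3)) (D2 / (1/7:ℝ)^(3-γ))) with hCdef
  have hC39 : (39:ℝ) ≤ C := le_max_left _ _
  have hC0 : 0 < C := by positivity
  intro x hx0 hxb hxarg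
  have ht : 0 < Complex.abs x := Complex.abs.pos hx0
  by_cases hts : Complex.abs x ≤ 1/7
  · -- near zero
    have hx3 : Complex.abs x ≤ 1/3 := hts.trans (by norm_num)
    have hfd := fdel_sub_self hx3
    set u : ℂ := fdel x / x with hudef
    have hxu : fdel x = x * u := by rw [hudef]; field_simp
    have hu1 : Complex.abs (u - 1) ≤ 3 * Complex.abs x ^ 3 := by
      have : u - 1 = (fdel x - x) / x := by rw [hudef]; field_simp
      rw [this, map_div₀]
      rw [div_le_iff₀ ht]
      calc Complex.abs (fdel x - x) ≤ 3 * Complex.abs x ^ 4 := hfd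
        _ = 3 * Complex.abs x ^ 3 * Complex.abs x := by ring
    have ht3 : Complex.abs x ^ 3 ≤ (1/7:ℝ)^3 := by gcongr
    have hpow3 : (Complex.abs x) ^ (3:ℕ) = Complex.abs x ^ (3:ℝ) := by
      rw [show (3:ℝ) = ((3:ℕ):ℝ) by norm_num, Real.rpow_natCast]
    have hu100 : Complex.abs (u - 1) ≤ 1/100 := by
      calc Complex.abs (u - 1) ≤ 3 * Complex.abs x ^ 3 := hu1
        _ ≤ 3 * (1/7:ℝ)^3 := by linarith
        _ ≤ 1/100 := by norm_num
    obtain ⟨hu0, hargu⟩ := near_one_facts hu100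
    have hargsum : x.arg + u.arg ∈ Set.Ioc (-Real.pi) Real.pi := by
      obtain ⟨ha1, ha2⟩ := abs_le.1 hxarg
      obtain ⟨hb1, hb2⟩ := abs_le.1 hargu
      constructor
      · linarith [Real.pi_gt_three]
      · linarith [Real.pi_gt_three]
    have habs_rpow : ∀ s : ℝ, Complex.abs (x ^ (s:ℂ)) = Complex.abs x ^ s :=
      fun s => Complex.abs_cpow_real x s
    constructor
    · -- E1
      have key : x ^ (α:ℂ) - fdel x ^ (α:ℂ) = x ^ (α:ℂ) * (1 - u ^ (α:ℂ)) := by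
        rw [hxu, mul_cpow_arg hx0 hu0 hargsum]
        ring
      rw [key, map_mul, habs_rpow α]
      have hub : Complex.abs (1 - u^(α:ℂ)) ≤ 36 * Complex.abs x ^ 3 := by
        rw [show (1:ℂ) - u^(α:ℂ) = -(u^(α:ℂ) - 1) by ring, map_neg_eq_map]
        calc Complex.abs (u^(α:ℂ) - 1) ≤ 12 * Complex.abs (u - 1) :=
              cpow_near_one hu100 (by rw [abs_le]; constructor <;> linarith)
          _ ≤ 12 * (3 * Complex.abs x ^ 3) := by gcongr
          _ = 36 * Complex.abs x ^ 3 := by ring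
      calc Complex.abs x ^ α * Complex.abs (1 - u^(α:ℂ))
          ≤ Complex.abs x ^ α * (36 * Complex.abs x ^ 3) := by
            exact mul_le_mul_of_nonneg_left hub (Real.rpow_nonneg (Complex.abs.nonneg x) α)
        _ = 36 * (Complex.abs x ^ α * Complex.abs x ^ (3:ℝ)) := by
            rw [← hpow3]; ring
        _ = 36 * Complex.abs x ^ (α + 3) := by rw [← Real.rpow_add ht]
        _ ≤ C * Complex.abs x ^ (α + 3) := by
            apply mul_le_mul_of_nonneg_right (by linarith) (Real.rpow_nonneg (Complex.abs.nonneg x) _)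
    · -- E2
      have hs3 : |(3-γ:ℝ)| ≤ 3 := by rw [abs_le]; constructor <;> linarith
      have hP := rho2_est hx0 hts
      set P : ℂ := x^3 * rho2 (Complex.exp (-x)) / 2 with hPdef
      have hPb : Complex.abs P ≤ 1 + 2 * Complex.abs x ^ 3 := by
        have := Complex.abs.sub_le_add P 1  -- |P| - wrong; use triangle
        calc Complex.abs P = Complex.abs (1 + (P - 1)) := by ring_nf
          _ ≤ 1 + Complex.abs (P - 1) := by
              refine (Complex.abs.add_le _ _).trans ?_
              simp
          _ ≤ 1 + 2 * Complex.abs x ^ 3 := by linarith [hP]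
      have husb : Complex.abs (u ^ (((3-γ:ℝ)):ℂ) - 1) ≤ 36 * Complex.abs x ^ 3 := by
        calc Complex.abs (u ^ (((3-γ:ℝ)):ℂ) - 1) ≤ 12 * Complex.abs (u - 1) :=
              cpow_near_one hu100 hs3
          _ ≤ 12 * (3 * Complex.abs x ^ 3) := by gcongr
          _ = 36 * Complex.abs x ^ 3 := by ring
      have key2 : fdel x ^ (((3-γ:ℝ)):ℂ) * (rho2 (Complex.exp (-x)) / 2) - x ^ (((-γ:ℝ)):ℂ)
          = x ^ (((-γ:ℝ)):ℂ) * ((u ^ (((3-γ:ℝ)):ℂ) - 1) * P + (P - 1)) := by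
        rw [hxu, mul_cpow_arg hx0 hu0 hargsum]
        have hsplit : (x : ℂ) ^ (((3-γ:ℝ)):ℂ) = x ^ (3:ℕ) * x ^ (((-γ:ℝ)):ℂ) := by
          rw [← Complex.cpow_natCast, ← Complex.cpow_add _ _ hx0]
          congr 1
          push_cast
          ring
        rw [hsplit, hPdef]
        ring
      rw [key2, map_mul, habs_rpow (-γ)]
      have hin : Complex.abs ((u ^ (((3-γ:ℝ)):ℂ) - 1) * P + (P - 1)) ≤ 39 * Complex.abs x ^ 3 := by
        have h3 : Complex.abs x ^ 3 ≤ (1/7:ℝ)^3 := by gcongr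
        calc Complex.abs ((u ^ (((3-γ:ℝ)):ℂ) - 1) * P + (P - 1))
            ≤ Complex.abs ((u ^ (((3-γ:ℝ)):ℂ) - 1) * P) + Complex.abs (P - 1) :=
              Complex.abs.add_le _ _
          _ = Complex.abs (u ^ (((3-γ:ℝ)):ℂ) - 1) * Complex.abs P + Complex.abs (P - 1) := by
              rw [map_mul]
          _ ≤ (36 * Complex.abs x ^ 3) * (1 + 2 * Complex.abs x ^ 3) + 2 * Complex.abs x ^ 3 := by
              gcongr
          _ ≤ 39 * Complex.abs x ^ 3 := by nlinarith [pow_nonneg (Complex.abs.nonneg x) 3]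
      calc Complex.abs x ^ (-γ) * Complex.abs ((u ^ (((3-γ:ℝ)):ℂ) - 1) * P + (P - 1))
          ≤ Complex.abs x ^ (-γ) * (39 * Complex.abs x ^ 3) :=
            mul_le_mul_of_nonneg_left hin (Real.rpow_nonneg (Complex.abs.nonneg x) _)
        _ = 39 * (Complex.abs x ^ (-γ) * Complex.abs x ^ (3:ℝ)) := by
            rw [← hpow3]; ring
        _ = 39 * Complex.abs x ^ (3 - γ) := by
            rw [← Real.rpow_add ht]; ring_nf
        _ ≤ C * Complex.abs x ^ (3 - γ) := by
            apply mul_le_mul_of_nonneg_right (by linarith) (Real.rpow_nonneg (Complex.abs.nonneg x) _)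
  · -- far from zero
    push_neg at hts
    have hts' : (1/7:ℝ) ≤ Complex.abs x := hts.le
    have hE : Complex.abs (Complex.exp (-x)) ≤ Eb := by
      rw [Complex.abs_exp]
      apply Real.exp_le_exp.2
      have := Complex.abs_re_le_abs x
      simp only [Complex.neg_re]
      have := abs_le.1 (this)
      linarith [this.1]
    have hE0 : 0 ≤ Complex.abs (Complex.exp (-x)) := Complex.abs.nonneg _
    have hf : Complex.abs (fdel x) ≤ Cf := by
      rw [fdel, hCfdef]
      set E := Complex.exp (-x)
      calc Complex.abs (11/6 - 3*E + (3/2)*E^2 - (1/3)*E^3)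
          ≤ Complex.abs (11/6 - 3*E + (3/2)*E^2) + Complex.abs ((1/3)*E^3) :=
            Complex.abs.sub_le_add _ _
        _ ≤ (Complex.abs (11/6 - 3*E) + Complex.abs ((3/2)*E^2)) + Complex.abs ((1/3)*E^3) := by
            gcongr; exact Complex.abs.add_le _ _
        _ ≤ ((Complex.abs (11/6 : ℂ) + Complex.abs (3*E)) + Complex.abs ((3/2)*E^2))
            + Complex.abs ((1/3)*E^3) := by
            gcongr; exact Complex.abs.sub_le_add _ _
        _ ≤ 11/6 + 3*Eb + (3/2)*Eb^2 + (1/3)*Eb^3 := by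
            simp only [map_mul, map_pow]
            have c1 : Complex.abs (11/6 : ℂ) = 11/6 := by norm_num
            have c2 : Complex.abs (3 : ℂ) = 3 := by norm_num
            have c3 : Complex.abs (3/2 : ℂ) = 3/2 := by norm_num
            have c4 : Complex.abs (1/3 : ℂ) = 1/3 := by norm_num
            rw [c1, c2, c3, c4]
            have p2 : Complex.abs E ^ 2 ≤ Eb ^ 2 := by gcongr
            have p3 : Complex.abs E ^ 3 ≤ Eb ^ 3 := by gcongr
            nlinarith
    have hfnn : 0 ≤ Complex.abs (fdel x) := Complex.abs.nonneg _
    constructor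
    · -- E1 far
      have h1 : Complex.abs (x ^ (α:ℂ) - fdel x ^ (α:ℂ)) ≤ D1 := by
        calc Complex.abs (x ^ (α:ℂ) - fdel x ^ (α:ℂ))
            ≤ Complex.abs (x ^ (α:ℂ)) + Complex.abs (fdel x ^ (α:ℂ)) :=
              Complex.abs.sub_le_add _ _
          _ = Complex.abs x ^ α + Complex.abs (fdel x) ^ α := by
              rw [Complex.abs_cpow_real, Complex.abs_cpow_real]
          _ ≤ (3.2:ℝ)^α + Cf^α := by
              have e1 : Complex.abs x ^ α ≤ (3.2:ℝ)^α :=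
                Real.rpow_le_rpow (Complex.abs.nonneg x) hxb (by linarith)
              have e2 : Complex.abs (fdel x) ^ α ≤ Cf^α :=
                Real.rpow_le_rpow hfnn hf (by linarith)
              linarith
      have h2 : (1/7:ℝ)^(α+3) ≤ Complex.abs x ^ (α+3) :=
        Real.rpow_le_rpow (by norm_num) hts' (by linarith)
      calc Complex.abs (x ^ (α:ℂ) - fdel x ^ (α:ℂ)) ≤ D1 := h1
        _ = (D1 / (1/7:ℝ)^(α+3)) * (1/7:ℝ)^(α+3) := by field_simp
        _ ≤ C * Complex.abs x ^ (α+3) := by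
            apply mul_le_mul _ h2 hsev.le hC0.le
            exact (le_max_left _ _).trans (le_max_right _ _)
    · -- E2 far
      have hrho : Complex.abs (rho2 (Complex.exp (-x))) ≤ Eb*(1+Eb)/m^3 := by
        rw [rho2, map_div₀, map_mul, map_pow]
        have hone : Complex.abs (1 + Complex.exp (-x)) ≤ 1 + Eb := by
          calc Complex.abs (1 + Complex.exp (-x)) ≤
              Complex.abs (1:ℂ) + Complex.abs (Complex.exp (-x)) := Complex.abs.add_le _ _
            _ ≤ 1 + Eb := by
                simp only [map_one]
                linarith
        apply div_le_div₀ (by nlinarith) _ (pow_pos hm 3) _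
        · apply mul_le_mul hE hone (Complex.abs.nonneg _) (by linarith)
        · exact pow_le_pow_left₀ hm.le (hden x hts' hxb) 3
      have h1 : Complex.abs (fdel x ^ (((3-γ:ℝ)):ℂ) * (rho2 (Complex.exp (-x)) / 2)
          - x ^ (((-γ:ℝ)):ℂ)) ≤ D2 := by
        calc Complex.abs (fdel x ^ (((3-γ:ℝ)):ℂ) * (rho2 (Complex.exp (-x)) / 2)
              - x ^ (((-γ:ℝ)):ℂ))
            ≤ Complex.abs (fdel x ^ (((3-γ:ℝ)):ℂ) * (rho2 (Complex.exp (-x)) / 2))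
              + Complex.abs (x ^ (((-γ:ℝ)):ℂ)) := Complex.abs.sub_le_add _ _
          _ = Complex.abs (fdel x) ^ (3-γ) * (Complex.abs (rho2 (Complex.exp (-x))) / 2)
              + Complex.abs x ^ (-γ) := by
              rw [map_mul, Complex.abs_cpow_real, Complex.abs_cpow_real, map_div₀]
              norm_num
          _ ≤ Cf^(3-γ) * ((Eb*(1+Eb)/m^3) / 2) + (1/7:ℝ)^(-γ) := by
              have e1 : Complex.abs (fdel x) ^ (3-γ) ≤ Cf^(3-γ) :=
                Real.rpow_le_rpow hfnn hf (by linarith)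
              have e2 : Complex.abs (rho2 (Complex.exp (-x))) / 2 ≤ (Eb*(1+Eb)/m^3) / 2 := by
                linarith
              have e3 : Complex.abs x ^ (-γ) ≤ (1/7:ℝ)^(-γ) := by
                rw [Real.rpow_neg (Complex.abs.nonneg x), Real.rpow_neg (by norm_num : (0:ℝ) ≤ 1/7)]
                have h17 : (0:ℝ) < (1/7:ℝ)^γ := by positivity
                apply inv_anti₀ h17
                exact Real.rpow_le_rpow (by norm_num) hts' (by linarith)
              have e4 : (0:ℝ) ≤ Complex.abs (rho2 (Complex.exp (-x))) / 2 := by positivity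
              have e5 : (0:ℝ) ≤ Cf^(3-γ) := Real.rpow_nonneg hCf0.le _
              nlinarith [mul_le_mul e1 e2 e4 e5]
          _ = D2 := by rw [hD2def]; ring
      have h2 : (1/7:ℝ)^(3-γ) ≤ Complex.abs x ^ (3-γ) :=
        Real.rpow_le_rpow (by norm_num) hts' (by linarith)
      calc Complex.abs (fdel x ^ (((3-γ:ℝ)):ℂ) * (rho2 (Complex.exp (-x)) / 2)
            - x ^ (((-γ:ℝ)):ℂ)) ≤ D2 := h1
        _ = (D2 / (1/7:ℝ)^(3-γ)) * (1/7:ℝ)^(3-γ) := by field_simp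
        _ ≤ C * Complex.abs x ^ (3-γ) := by
            apply mul_le_mul _ h2 hsev2.le hC0.le
            exact (le_max_right _ _).trans (le_max_right _ _)

set_option maxHeartbeats 1000000 in
theorem bdf3_noise_term_operator_estimate
    {H : Type*} [NormedAddCommGroup H] [InnerProductSpace ℂ H] [CompleteSpace H]
    (α γ : ℝ) (hα : α ∈ Ioo (1 : ℝ) 2) (hγ : γ ∈ Ioo (0 : ℝ) 1) (M : ℝ) (hM : 0 < M) :
    ∃ θ₀ ∈ Ioo (Real.pi / 2) Real.pi, ∀ θ ∈ Ioo (Real.pi / 2) θ₀,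
      ∃ c > (0 : ℝ),
        ∀ τ : ℝ, 0 < τ → ∀ z ∈ Dset τ θ,
          ∀ R₁ R₂ : H →L[ℂ] H,
            ‖R₁‖ ≤ M * ‖z‖ ^ (-α) →
            ‖R₂‖ ≤ M * ‖z‖ ^ (-α) →
            R₂ - R₁ = (z ^ (α : ℂ) - (bdf3 τ (Complex.exp (-z * τ))) ^ (α : ℂ)) •
              (R₂ ∘L R₁) →
            ‖((bdf3 τ (Complex.exp (-z * τ))) ^ (((3 - γ : ℝ)) : ℂ) *
                  (rho2 (Complex.exp (-z * τ)) / 2) * (τ : ℂ) ^ 3) • R₂ -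
                (z ^ (-(γ : ℂ))) • R₁‖ ≤
              c * τ ^ 3 * ‖z‖ ^ (3 - α - γ) := by
  obtain ⟨hα1, hα2⟩ := hα
  obtain ⟨hγ1, hγ2⟩ := hγ
  obtain ⟨C, hC0, hCmain⟩ := scalar_main α γ ⟨hα1, hα2⟩ ⟨hγ1, hγ2⟩
  refine ⟨Real.pi/2 + 1/100, ⟨by linarith [Real.pi_pos], by linarith [Real.pi_gt_three]⟩, ?_⟩
  intro θ hθ
  obtain ⟨hθ1, hθ2⟩ := hθ
  refine ⟨(1 + 33*C)*C*M^2 + C*M, by positivity, ?_⟩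
  intro τ hτ z hz R₁ R₂ hR1 hR2 hres
  obtain ⟨hz0, hcase⟩ := hz
  have hτC : (τ:ℂ) ≠ 0 := Complex.ofReal_ne_zero.2 hτ.ne'
  set x : ℂ := z * (τ:ℂ) with hxdef
  have hx0 : x ≠ 0 := mul_ne_zero hz0 hτC
  have ht : 0 < Complex.abs x := Complex.abs.pos hx0
  have htz : Complex.abs x = Complex.abs z * τ := by
    rw [hxdef, map_mul, Complex.abs_ofReal, _root_.abs_of_pos hτ]
  have hargx : x.arg = z.arg := Complex.arg_mul_real hτ z
  have hargle : |x.arg| ≤ Real.pi/2 + 1/100 := by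
    rw [hargx]
    rcases hcase with ⟨h1, _⟩ | ⟨_, h2⟩
    · rw [h1]; linarith
    · linarith
  have habsx : Complex.abs x ≤ 3.2 := by
    rcases hcase with ⟨h1, h2⟩ | ⟨h1, h2⟩
    · -- arc case
      have hsin : Real.sin θ ≥ 0.99 := by
        have e1 : Real.sin θ = Real.cos (θ - Real.pi/2) := by
          rw [Real.cos_sub_pi_div_two]
        rw [e1]
        have e2 : 1 - (θ - Real.pi/2)^2/2 ≤ Real.cos (θ - Real.pi/2) :=
          Real.one_sub_sq_div_two_le_cos
        nlinarith
      have him : |x.im| ≤ Real.pi := by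
        have : x.im = z.im * τ := by
          rw [hxdef]
          simp [Complex.mul_im, Complex.ofReal_re, Complex.ofReal_im]
        rw [this, abs_mul, _root_.abs_of_pos hτ]
        calc |z.im| * τ ≤ (Real.pi / τ) * τ := by
              apply mul_le_mul_of_nonneg_right h2 hτ.le
          _ = Real.pi := by field_simp
      have hsinarg : |Real.sin x.arg| = Real.sin θ := by
        have hθ0 : (0:ℝ) ≤ θ := by linarith [Real.pi_pos]
        have hxargθ : |x.arg| = θ := by rw [hargx]; exact h1
        rcases (abs_eq hθ0).1 hxargθ with h | h
        · rw [h, _root_.abs_of_nonneg]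
          apply Real.sin_nonneg_of_nonneg_of_le_pi <;> nlinarith [Real.pi_gt_three]
        · rw [h, Real.sin_neg, abs_neg, _root_.abs_of_nonneg]
          apply Real.sin_nonneg_of_nonneg_of_le_pi <;> nlinarith [Real.pi_gt_three]
      have hsa := Complex.sin_arg x
      have : |x.im| = Complex.abs x * Real.sin θ := by
        rw [← hsinarg, hsa, abs_div, _root_.abs_of_nonneg (norm_nonneg x)]
        field_simp
        rfl
      nlinarith [Real.pi_lt_d2, him, ht]
    · -- disc case
      calc Complex.abs x = Complex.abs z * τ := htz
        _ ≤ (1/τ) * τ := mul_le_mul_of_nonneg_right h1 hτ.le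
        _ = 1 := by field_simp
        _ ≤ 3.2 := by norm_num
  obtain ⟨hE1, hE2⟩ := hCmain x hx0 habsx hargle
  -- scalar reductions
  have hτi : (0:ℝ) < τ⁻¹ := by positivity
  have hzx : z = ((τ⁻¹:ℝ):ℂ) * x := by
    rw [hxdef]
    push_cast
    field_simp
  have hexp : Complex.exp (-z * τ) = Complex.exp (-x) := by rw [hxdef, neg_mul]
  have hw : bdf3 τ (Complex.exp (-z * τ)) = ((τ⁻¹:ℝ):ℂ) * fdel x := by
    rw [bdf3, hexp, fdel]
    push_cast
    ring
  set t : ℝ := Complex.abs x with htdef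
  have ht' : (0:ℝ) < t := ht
  have habsz : Complex.abs z = t / τ := by
    rw [htz]
    field_simp
  -- complex scalars
  set F : ℂ := fdel x ^ (((3 - γ:ℝ)):ℂ) * (rho2 (Complex.exp (-x)) / 2) with hFdef
  set X : ℂ := x ^ (((-γ:ℝ)):ℂ) with hXdef
  set lam : ℂ := z ^ (α : ℂ) - (bdf3 τ (Complex.exp (-z * τ))) ^ (α : ℂ) with hlamdef
  set A : ℂ := (bdf3 τ (Complex.exp (-z * τ))) ^ (((3 - γ : ℝ)) : ℂ) *
      (rho2 (Complex.exp (-z * τ)) / 2) * (τ : ℂ) ^ 3 with hAdef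
  set B : ℂ := z ^ (-(γ : ℂ)) with hBdef
  have hzα : z ^ (α:ℂ) = ((τ⁻¹ ^ α:ℝ):ℂ) * x ^ (α:ℂ) := by
    rw [hzx]; exact cpow_real_smul hτi x α
  have hwα : (bdf3 τ (Complex.exp (-z * τ))) ^ (α:ℂ)
      = ((τ⁻¹ ^ α:ℝ):ℂ) * fdel x ^ (α:ℂ) := by
    rw [hw]; exact cpow_real_smul hτi (fdel x) α
  have hlam : lam = ((τ⁻¹ ^ α:ℝ):ℂ) * (x ^ (α:ℂ) - fdel x ^ (α:ℂ)) := by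
    rw [hlamdef, hzα, hwα]; ring
  have hA : A = ((τ⁻¹ ^ (3-γ) * τ^(3:ℕ) :ℝ):ℂ) * F := by
    rw [hAdef, hw, cpow_real_smul hτi (fdel x) (3-γ), hexp, hFdef]
    push_cast
    ring
  have hB : B = ((τ⁻¹ ^ (-γ):ℝ):ℂ) * X := by
    rw [hBdef, show -(γ:ℂ) = (((-γ:ℝ)):ℂ) by push_cast; ring, hzx,
      cpow_real_smul hτi x (-γ), hXdef]
  have fac1 : τ⁻¹ ^ (3-γ) * τ^(3:ℕ) = τ ^ γ := by
    rw [Real.inv_rpow hτ.le, ← Real.rpow_natCast τ 3, inv_mul_eq_div, ← Real.rpow_sub hτ]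
    congr 1
    push_cast
    ring
  have fac2 : τ⁻¹ ^ (-γ:ℝ) = τ ^ γ := by
    rw [Real.inv_rpow hτ.le, ← Real.rpow_neg hτ.le]
    congr 1
    ring
  have hA' : A = ((τ ^ γ:ℝ):ℂ) * F := by rw [hA, fac1]
  have hAB : A - B = ((τ ^ γ:ℝ):ℂ) * (F - X) := by
    rw [hA', hB, fac2]; ring
  have hτγ : (0:ℝ) ≤ τ ^ γ := Real.rpow_nonneg hτ.le γ
  have hτα : (0:ℝ) ≤ τ⁻¹ ^ α := Real.rpow_nonneg hτi.le α
  have Hτ : ∀ a b : ℝ, τ^a * τ^b = τ^(a+b) := fun a b => (Real.rpow_add hτ a b).symm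
  have Ht2 : ∀ a b : ℝ, t^a * t^b = t^(a+b) := fun a b => (Real.rpow_add ht' a b).symm
  -- |F| bound
  have hXval : Complex.abs X = t ^ (-γ) := by
    rw [hXdef, Complex.abs_cpow_real]
  have ht3le : t ^ (3:ℝ) ≤ 33 := by
    rw [show (3:ℝ) = ((3:ℕ):ℝ) by norm_num, Real.rpow_natCast]
    calc t^(3:ℕ) ≤ (3.2:ℝ)^(3:ℕ) := pow_le_pow_left₀ ht'.le habsx 3
      _ ≤ 33 := by norm_num
  have hsplit3 : t ^ (3-γ) = t ^ (3:ℝ) * t ^ (-γ) := by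
    rw [Ht2]; congr 1; try ring
  have htγ : (0:ℝ) ≤ t ^ (-γ) := Real.rpow_nonneg ht'.le _
  have ht3' : (0:ℝ) ≤ t ^ (3:ℝ) := Real.rpow_nonneg ht'.le _
  have hFb : Complex.abs F ≤ (1 + 33*C) * t ^ (-γ) := by
    have h1 : Complex.abs F ≤ Complex.abs X + Complex.abs (F - X) := by
      calc Complex.abs F = Complex.abs (X + (F - X)) := by ring_nf
        _ ≤ Complex.abs X + Complex.abs (F - X) := Complex.abs.add_le _ _
    have h2 : Complex.abs (F - X) ≤ C * t ^ (3-γ) := hE2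
    rw [hXval] at h1
    have h3 : C * t ^ (3-γ) ≤ 33 * C * t ^ (-γ) := by
      rw [hsplit3]
      calc C * (t ^ (3:ℝ) * t ^ (-γ)) ≤ C * (33 * t ^ (-γ)) := by
            apply mul_le_mul_of_nonneg_left _ hC0.le
            exact mul_le_mul_of_nonneg_right ht3le htγ
        _ = 33 * C * t ^ (-γ) := by ring
    nlinarith
  have nA : Complex.abs A ≤ τ ^ γ * ((1 + 33*C) * t ^ (-γ)) := by
    rw [hA', map_mul, Complex.abs_ofReal, _root_.abs_of_nonneg hτγ]
    exact mul_le_mul_of_nonneg_left hFb hτγ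
  have nAB : Complex.abs (A - B) ≤ τ ^ γ * (C * t ^ (3-γ)) := by
    rw [hAB, map_mul, Complex.abs_ofReal, _root_.abs_of_nonneg hτγ]
    exact mul_le_mul_of_nonneg_left hE2 hτγ
  have nlam : Complex.abs lam ≤ τ⁻¹ ^ α * (C * t ^ (α+3)) := by
    rw [hlam, map_mul, Complex.abs_ofReal, _root_.abs_of_nonneg hτα]
    exact mul_le_mul_of_nonneg_left hE1 hτα
  have nz : Complex.abs z ^ (-α) = t ^ (-α) * τ ^ α := by
    rw [habsz, Real.div_rpow ht'.le hτ.le, div_eq_mul_inv, ← Real.rpow_neg hτ.le]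
    congr 1
    ring
  have hR1' : ‖R₁‖ ≤ M * (t ^ (-α) * τ ^ α) := by rw [← nz]; exact hR1
  have hR2' : ‖R₂‖ ≤ M * (t ^ (-α) * τ ^ α) := by rw [← nz]; exact hR2
  have hMn : (0:ℝ) ≤ M * (t ^ (-α) * τ ^ α) := by
    have := Real.rpow_nonneg ht'.le (-α)
    have := Real.rpow_nonneg hτ.le α
    positivity
  -- operator step
  have hsplitop : A • R₂ - B • R₁ = A • (R₂ - R₁) + (A - B) • R₁ := by
    rw [smul_sub, sub_smul]; abel
  have hRR : ‖R₂ - R₁‖ ≤ Complex.abs lam * (‖R₂‖ * ‖R₁‖) := by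
    rw [hres]
    rw [norm_smul, Complex.norm_eq_abs]
    exact mul_le_mul_of_nonneg_left (ContinuousLinearMap.opNorm_comp_le R₂ R₁)
      (Complex.abs.nonneg _)
  have step1 : ‖A • R₂ - B • R₁‖ ≤
      Complex.abs A * ‖R₂ - R₁‖ + Complex.abs (A - B) * ‖R₁‖ := by
    rw [hsplitop]
    refine (norm_add_le _ _).trans ?_
    rw [norm_smul, norm_smul, Complex.norm_eq_abs, Complex.norm_eq_abs]
  -- final computation
  have eτ : τ^γ * τ^(-α) * τ^α * τ^α = τ^(α+γ) := by
    rw [Hτ, Hτ, Hτ]; congr 1; try ring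
  have et : t^(-γ) * t^(α+3) * t^(-α) * t^(-α) = t^(3-α-γ) := by
    rw [Ht2, Ht2, Ht2]; congr 1; try ring
  have eτ2 : τ^γ * τ^α = τ^(α+γ) := by rw [Hτ]; congr 1; try ring
  have et2 : t^(3-γ) * t^(-α) = t^(3-α-γ) := by rw [Ht2]; congr 1; try ring
  have hτiα : τ⁻¹ ^ α = τ ^ (-α) := by
    rw [Real.inv_rpow hτ.le, ← Real.rpow_neg hτ.le]
  have idR : ((1 + 33*C)*C*M^2 + C*M) * τ ^ (3:ℕ) * Complex.abs z ^ (3-α-γ)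
      = ((1 + 33*C)*C*M^2 + C*M) * (τ^(α+γ) * t^(3-α-γ)) := by
    rw [habsz, Real.div_rpow ht'.le hτ.le, ← Real.rpow_natCast τ 3]
    rw [div_eq_mul_inv, ← Real.rpow_neg hτ.le]
    calc ((1 + 33*C)*C*M^2 + C*M) * τ^((3:ℕ):ℝ) * (t^(3-α-γ) * τ^(-(3-α-γ)))
        = ((1 + 33*C)*C*M^2 + C*M) * ((τ^((3:ℕ):ℝ) * τ^(-(3-α-γ))) * t^(3-α-γ)) := by ring
      _ = ((1 + 33*C)*C*M^2 + C*M) * (τ^(α+γ) * t^(3-α-γ)) := by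
          rw [Hτ]
          congr 2
          push_cast
          ring
  calc ‖A • R₂ - B • R₁‖
      ≤ Complex.abs A * ‖R₂ - R₁‖ + Complex.abs (A - B) * ‖R₁‖ := step1
    _ ≤ Complex.abs A * (Complex.abs lam * (‖R₂‖ * ‖R₁‖)) + Complex.abs (A - B) * ‖R₁‖ := by
        apply add_le_add _ le_rfl
        exact mul_le_mul_of_nonneg_left hRR (Complex.abs.nonneg _)
    _ ≤ (τ ^ γ * ((1 + 33*C) * t ^ (-γ))) *
          ((τ⁻¹ ^ α * (C * t ^ (α+3))) * ((M * (t ^ (-α) * τ ^ α)) * (M * (t ^ (-α) * τ ^ α))))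
        + (τ ^ γ * (C * t ^ (3-γ))) * (M * (t ^ (-α) * τ ^ α)) := by
        apply add_le_add
        · apply mul_le_mul nA _ (by positivity) (by positivity)
          apply mul_le_mul nlam _ (by positivity) (by positivity)
          apply mul_le_mul hR2' hR1' (norm_nonneg _) hMn
        · exact mul_le_mul nAB hR1' (norm_nonneg _) (by positivity)
    _ = (1 + 33*C)*C*M^2 * ((τ^γ * τ^(-α) * τ^α * τ^α) * (t^(-γ) * t^(α+3) * t^(-α) * t^(-α)))
        + C*M * ((τ^γ * τ^α) * (t^(3-γ) * t^(-α))) := by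
        rw [hτiα]; ring
    _ = ((1 + 33*C)*C*M^2 + C*M) * (τ^(α+γ) * t^(3-α-γ)) := by
        rw [eτ, et, eτ2, et2]; ring
    _ = ((1 + 33*C)*C*M^2 + C*M) * τ ^ (3:ℕ) * Complex.abs z ^ (3-α-γ) := idR.symm
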